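/- For 0 < m < 1, K0(m) = pi/(2 * AGM(1, sqrt(1-m))), where K0(m) = integral from 0 to pi/2 of (1 - m sin^2 s)^{-1/2} ds. -/

import Mathlib

open Real Filter

/-- The coupled arithmetic-geometric mean iteration starting from \`(a, b)\`. -/
noncomputable def agmPair (a b : ℝ) : ℕ → ℝ × ℝ
  | 0 => (a, b)
  | n+1 => ((agmPair a b n).1 / 2 + (agmPair a b n).2 / 2,
      Real.sqrt ((agmPair a b n).1 * (agmPair a b n).2))

/-- The arithmetic-geometric mean of \`a\` and \`b\`, the common limit of the AGM iteration. -/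
noncomputable def agm (a b : ℝ) : ℝ :=
  limUnder Filter.atTop fun n => (agmPair a b n).1

/-- The complete elliptic integral of the first kind, as a function of the modulus `m`. -/
noncomputable def K0 (m : ℝ) : ℝ :=
  ∫ s in (0:ℝ)..(π/2), 1 / Real.sqrt (1 - m * Real.sin s ^ 2)

open MeasureTheory Set Topology

/-! ### The integrand `F a b t = 1/√((t²+a²)(t²+b²))` and its basic properties -/

noncomputable def F (a b t : ℝ) : ℝ := 1 / Real.sqrt ((t^2+a^2)*(t^2+b^2))

lemma F_pos_den {a b : ℝ} (ha : 0 < a) (hb : 0 < b) (t : ℝ) :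
    0 < (t^2+a^2)*(t^2+b^2) := by positivity

lemma F_cont {a b : ℝ} (ha : 0 < a) (hb : 0 < b) : Continuous (F a b) := by
  apply Continuous.div continuous_const
  · exact (Real.continuous_sqrt).comp (by continuity)
  · intro t
    exact (Real.sqrt_pos.mpr (F_pos_den ha hb t)).ne'

lemma F_le_inv {a b c : ℝ} (ha : 0 < a) (hb : 0 < b) (hc : 0 < c) (h1 : c ≤ a) (h2 : c ≤ b)
    (t : ℝ) : F a b t ≤ (t^2+c^2)⁻¹ := by
  have hp : (0:ℝ) < t^2+c^2 := by positivity
  have hge : t^2+c^2 ≤ Real.sqrt ((t^2+a^2)*(t^2+b^2)) :=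
    calc t^2+c^2 = Real.sqrt ((t^2+c^2)^2) := (Real.sqrt_sq hp.le).symm
    _ ≤ _ := Real.sqrt_le_sqrt (by
        have := mul_le_mul (show t^2+c^2 ≤ t^2+a^2 by nlinarith)
          (show t^2+c^2 ≤ t^2+b^2 by nlinarith) hp.le (by positivity)
        nlinarith)
  rw [F, one_div]
  exact inv_anti₀ hp hge

lemma inv_le_F {a b c : ℝ} (ha : 0 < a) (hb : 0 < b) (hc : 0 < c) (h1 : a ≤ c) (h2 : b ≤ c)
    (t : ℝ) : (t^2+c^2)⁻¹ ≤ F a b t := by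
  have hp : (0:ℝ) < t^2+c^2 := by positivity
  have hs := Real.sqrt_pos.mpr (F_pos_den ha hb t)
  have hle : Real.sqrt ((t^2+a^2)*(t^2+b^2)) ≤ t^2+c^2 :=
    calc Real.sqrt ((t^2+a^2)*(t^2+b^2)) ≤ Real.sqrt ((t^2+c^2)^2) :=
      Real.sqrt_le_sqrt (by
        have := mul_le_mul (show t^2+a^2 ≤ t^2+c^2 by nlinarith)
          (show t^2+b^2 ≤ t^2+c^2 by nlinarith) (by positivity) hp.le
        nlinarith)
    _ = t^2+c^2 := Real.sqrt_sq hp.le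
  rw [F, one_div]
  exact inv_anti₀ hs hle

lemma integrable_inv_sq_add {c : ℝ} (hc : 0 < c) :
    Integrable (fun t : ℝ => (t^2+c^2)⁻¹) := by
  have h : (fun t : ℝ => (t^2+c^2)⁻¹) = fun t => (c^2)⁻¹ * (1+(t/c)^2)⁻¹ := by
    funext t; field_simp; ring
  rw [h]
  exact (integrable_inv_one_add_sq.comp_div hc.ne').const_mul _

lemma F_integrableOn {a b : ℝ} (ha : 0 < a) (hb : 0 < b) (s : Set ℝ) :
    IntegrableOn (F a b) s := by
  apply Integrable.integrableOn
  set c := min a b with hcdef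
  have hc : 0 < c := lt_min ha hb
  apply (integrable_inv_sq_add hc).mono ((F_cont ha hb).aestronglyMeasurable)
  filter_upwards with t
  rw [norm_of_nonneg (by rw [F]; positivity),
    norm_of_nonneg (by positivity : (0:ℝ) ≤ (t^2+c^2)⁻¹)]
  exact F_le_inv ha hb hc (min_le_left _ _) (min_le_right _ _) t

lemma integral_Ioi_inv_sq_add {c : ℝ} (hc : 0 < c) :
    ∫ t in Ioi (0:ℝ), (t^2+c^2)⁻¹ = π/(2*c) := by
  have h := integral_Ioi_of_hasDerivAt_of_tendsto'
      (f := fun t => c⁻¹ * Real.arctan (t/c)) (f' := fun t => (t^2+c^2)⁻¹) (a := 0)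
      (m := c⁻¹ * (π/2)) (fun x _ => ?_) ((integrable_inv_sq_add hc).integrableOn) ?_
  · rw [h]; simp [Real.arctan_zero]; ring
  · have h2 := ((Real.hasDerivAt_arctan (x/c)).comp x
      ((hasDerivAt_id x).div_const c)).const_mul c⁻¹
    refine h2.congr_deriv ?_
    beta_reduce
    field_simp; ring
  · have h3 : Tendsto (fun t : ℝ => t/c) atTop atTop := tendsto_id.atTop_div_const hc
    have := (tendsto_nhds_of_tendsto_nhdsWithin Real.tendsto_arctan_atTop).comp h3
    simpa [Function.comp] using this.const_mul c⁻¹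

/-! ### The Landen/Gauss transformation: invariance of the integral under the AGM step -/

lemma landen_img {a b : ℝ} (ha : 0 < a) (hb : 0 < b) :
    (fun x => (x - a*b/x)/2) '' Ioi 0 = univ := by
  apply eq_univ_of_forall
  intro t
  have hab : 0 < a*b := mul_pos ha hb
  have h1 : 0 < t^2 + a*b := by positivity
  set x := t + Real.sqrt (t^2 + a*b) with hxdef
  have hs : |t| < Real.sqrt (t^2+a*b) := by
    rw [show |t| = Real.sqrt (t^2) from (Real.sqrt_sq_eq_abs t).symm]
    exact Real.sqrt_lt_sqrt (sq_nonneg t) (by linarith)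
  have hx : 0 < x := by
    have := neg_abs_le t
    simp only [hxdef]; linarith
  refine ⟨x, hx, ?_⟩
  have hsq : Real.sqrt (t^2+a*b) ^ 2 = t^2 + a*b := Real.sq_sqrt h1.le
  have hx2 : x^2 - a*b = 2*t*x := by rw [hxdef]; nlinarith [hsq]
  field_simp
  linarith [hx2]

lemma landen_pointwise {a b x : ℝ} (ha : 0 < a) (hb : 0 < b) (hx : 0 < x) :
    |(1 + a*b/x^2)/2| * F ((a+b)/2) (Real.sqrt (a*b)) ((x - a*b/x)/2) = 2 * F a b x := by
  have hab : 0 < a*b := mul_pos ha hb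
  set t := (x - a*b/x)/2 with ht
  have hB : Real.sqrt (a*b) ^ 2 = a*b := Real.sq_sqrt hab.le
  have key : (t^2 + ((a+b)/2)^2) * (t^2 + Real.sqrt (a*b)^2)
      = ((x^2+a^2)*(x^2+b^2)) * ((x^2+a*b)/(4*x^2))^2 := by
    rw [hB, ht]; field_simp; ring
  have hP : 0 < (x^2+a^2)*(x^2+b^2) := by positivity
  have hQ : (0:ℝ) < (x^2+a*b)/(4*x^2) := by positivity
  rw [F, F, key, Real.sqrt_mul hP.le, Real.sqrt_sq hQ.le,
    abs_of_pos (by positivity : (0:ℝ) < (1 + a*b/x^2)/2)]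
  have hs : Real.sqrt ((x^2+a^2)*(x^2+b^2)) ≠ 0 := (Real.sqrt_pos.mpr hP).ne'
  field_simp
  ring

lemma landen {a b : ℝ} (ha : 0 < a) (hb : 0 < b) :
    ∫ t : ℝ, F ((a+b)/2) (Real.sqrt (a*b)) t = 2 * ∫ x in Ioi (0:ℝ), F a b x := by
  have hab : 0 < a*b := mul_pos ha hb
  have hderiv : ∀ x ∈ Ioi (0:ℝ), HasDerivWithinAt (fun x => (x - a*b/x)/2)
      ((1 + a*b/x^2)/2) (Ioi 0) x := by
    intro x hx
    have hx0 : (0:ℝ) < x := hx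
    have h := (((hasDerivAt_id x).sub ((hasDerivAt_inv hx0.ne').const_mul (a*b))).div_const 2)
    have h2 : (1 - a*b * (-(x^2)⁻¹))/2 = (1 + a*b/x^2)/2 := by
      field_simp
      ring
    simp only [Pi.sub_apply, id] at h
    rw [← h2]
    exact (h.congr_deriv rfl).hasDerivWithinAt
  have hmono : StrictMonoOn (fun x => (x - a*b/x)/2) (Ioi 0) := by
    intro x hx y hy hxy
    have hx0 : (0:ℝ) < x := hx
    have hy0 : (0:ℝ) < y := hy
    have : a*b/y < a*b/x := div_lt_div_of_pos_left hab hx0 hxy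
    dsimp only
    linarith
  have himg := landen_img ha hb
  have hsub := integral_image_eq_integral_abs_deriv_smul measurableSet_Ioi hderiv
    hmono.injOn (F ((a+b)/2) (Real.sqrt (a*b)))
  rw [himg] at hsub
  rw [← setIntegral_univ (μ := volume), hsub]
  rw [setIntegral_congr_fun measurableSet_Ioi
    (fun x hx => by
      rw [smul_eq_mul, landen_pointwise ha hb hx])]
  rw [integral_const_mul]

lemma full_eq_two_half {a b : ℝ} (ha : 0 < a) (hb : 0 < b) :
    ∫ t : ℝ, F a b t = 2 * ∫ t in Ioi (0:ℝ), F a b t := by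
  have h : ∫ t : ℝ, F a b t = ∫ t : ℝ, F a b |t| := by
    congr 1; funext t
    rw [F, F, sq_abs]
  rw [h, integral_comp_abs]

lemma half_invariant {a b : ℝ} (hb : 0 < b) (hba : b ≤ a) :
    ∫ x in Ioi (0:ℝ), F ((a+b)/2) (Real.sqrt (a*b)) x = ∫ x in Ioi (0:ℝ), F a b x := by
  have ha : 0 < a := lt_of_lt_of_le hb hba
  have hA : 0 < (a+b)/2 := by linarith
  have hB : 0 < Real.sqrt (a*b) := Real.sqrt_pos.mpr (mul_pos ha hb)
  have h1 := landen ha hb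
  rw [full_eq_two_half hA hB] at h1
  linarith

/-! ### Properties of the AGM iteration -/

section AGM
variable {a b : ℝ} (ha : 0 < b) (hba : b ≤ a)

lemma agm_amgm {x y : ℝ} (hx : 0 < x) (hy : 0 < y) : Real.sqrt (x*y) ≤ x/2 + y/2 := by
  have : Real.sqrt (x*y) ≤ Real.sqrt ((x/2+y/2)^2) :=
    Real.sqrt_le_sqrt (by nlinarith [sq_nonneg (x-y)])
  rwa [Real.sqrt_sq (by linarith)] at this

include ha hba in
lemma agm_basic : ∀ n, 0 < (agmPair a b n).2 ∧ (agmPair a b n).2 ≤ (agmPair a b n).1 := by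
  intro n
  induction n with
  | zero => exact ⟨ha, hba⟩
  | succ n ih =>
    obtain ⟨h1, h2⟩ := ih
    have hpos : 0 < (agmPair a b n).1 := lt_of_lt_of_le h1 h2
    refine ⟨Real.sqrt_pos.mpr (mul_pos hpos h1), ?_⟩
    exact agm_amgm hpos h1

include ha hba in
lemma agm_bmono : Monotone fun n => (agmPair a b n).2 := by
  apply monotone_nat_of_le_succ
  intro n
  obtain ⟨h1, h2⟩ := agm_basic ha hba n
  calc (agmPair a b n).2 = Real.sqrt ((agmPair a b n).2 * (agmPair a b n).2) := by
        rw [Real.sqrt_mul_self h1.le]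
  _ ≤ (agmPair a b (n+1)).2 := Real.sqrt_le_sqrt (by nlinarith)

include ha hba in
lemma agm_aanti : Antitone fun n => (agmPair a b n).1 := by
  apply antitone_nat_of_succ_le
  intro n
  obtain ⟨h1, h2⟩ := agm_basic ha hba n
  show (agmPair a b n).1/2 + (agmPair a b n).2/2 ≤ (agmPair a b n).1
  linarith

include ha hba in
lemma agm_gap : ∀ n, (agmPair a b n).1 - (agmPair a b n).2 ≤ (a-b)/2^n := by
  intro n
  induction n with
  | zero => simp [agmPair]
  | succ n ih =>
    obtain ⟨h1, h2⟩ := agm_basic ha hba n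
    have hb' := agm_bmono ha hba (Nat.le_succ n)
    have : (agmPair a b (n+1)).1 - (agmPair a b (n+1)).2
        ≤ ((agmPair a b n).1 - (agmPair a b n).2)/2 := by
      show (agmPair a b n).1/2 + (agmPair a b n).2/2 - (agmPair a b (n+1)).2 ≤ _
      have : (agmPair a b n).2 ≤ (agmPair a b (n+1)).2 := hb'
      linarith
    rw [pow_succ, ← div_div]
    linarith [ih]

include ha hba in
lemma agm_b_le_a : ∀ n m, (agmPair a b n).2 ≤ (agmPair a b m).1 := by
  intro n m
  rcases le_total n m with h | h
  · exact le_trans (agm_bmono ha hba h) (agm_basic ha hba m).2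
  · exact le_trans (agm_basic ha hba n).2 (agm_aanti ha hba h)

include ha hba in
lemma agm_tendsto : ∃ M : ℝ, 0 < M ∧ agm a b = M ∧
    Tendsto (fun n => (agmPair a b n).1) atTop (𝓝 M) ∧
    Tendsto (fun n => (agmPair a b n).2) atTop (𝓝 M) ∧
    (∀ n, (agmPair a b n).2 ≤ M ∧ M ≤ (agmPair a b n).1) := by
  have hbdd : BddBelow (range fun n => (agmPair a b n).1) := by
    refine ⟨b, ?_⟩
    rintro x ⟨n, rfl⟩
    exact agm_b_le_a ha hba 0 n
  have hA : Tendsto (fun n => (agmPair a b n).1) atTop (𝓝 (⨅ n, (agmPair a b n).1)) :=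
    tendsto_atTop_ciInf (agm_aanti ha hba) hbdd
  set M := ⨅ n, (agmPair a b n).1 with hM
  have hMb : b ≤ M := le_ciInf fun n => agm_b_le_a ha hba 0 n
  have hMpos : 0 < M := lt_of_lt_of_le ha hMb
  have hgap : Tendsto (fun n => (agmPair a b n).1 - (agmPair a b n).2) atTop (𝓝 0) := by
    apply squeeze_zero (fun n => by linarith [(agm_basic ha hba n).2]) (agm_gap ha hba)
    have : Tendsto (fun n : ℕ => (a-b) * (1/2)^n) atTop (𝓝 ((a-b) * 0)) :=
      (tendsto_pow_atTop_nhds_zero_of_lt_one (by norm_num) (by norm_num)).const_mul _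
    simpa [div_eq_mul_inv, inv_pow] using this
  have hB : Tendsto (fun n => (agmPair a b n).2) atTop (𝓝 M) := by
    have := hA.sub hgap
    simpa using this
  refine ⟨M, hMpos, hA.limUnder_eq, hA, hB, fun n => ⟨?_, ciInf_le hbdd n⟩⟩
  exact le_ciInf fun m => agm_b_le_a ha hba n m

end AGM

/-! ### The tangent substitution: `K0 m` as an integral over `(0, ∞)` -/

lemma tan_img {b : ℝ} (hb : 0 < b) :
    (fun s => b * Real.tan s) '' Ioo 0 (π/2) = Ioi 0 := by
  ext x
  constructor
  · rintro ⟨s, hs, rfl⟩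
    exact mul_pos hb (Real.tan_pos_of_pos_of_lt_pi_div_two hs.1 hs.2)
  · intro hx
    refine ⟨Real.arctan (x/b), ⟨?_, Real.arctan_lt_pi_div_two _⟩, ?_⟩
    · rw [← Real.arctan_zero]
      exact Real.arctan_strictMono (div_pos hx hb)
    · simp only
      rw [Real.tan_arctan]
      field_simp

lemma K0_eq_integral_F {m b : ℝ} (hm0 : 0 < m) (hm1 : m < 1)
    (hb : 0 < b) (hb2 : b^2 = 1 - m) :
    K0 m = ∫ x in Ioi (0:ℝ), F 1 b x := by
  have h1m : (0:ℝ) < 1 - m := by linarith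
  have hmem : ∀ s ∈ Ioo (0:ℝ) (π/2), s ∈ Ioo (-(π/2)) (π/2) := by
    intro s hs
    exact ⟨by linarith [hs.1, Real.pi_pos], hs.2⟩
  have hderiv : ∀ s ∈ Ioo (0:ℝ) (π/2), HasDerivWithinAt (fun s => b * Real.tan s)
      (b * (1 / Real.cos s ^ 2)) (Ioo 0 (π/2)) s := by
    intro s hs
    exact ((Real.hasDerivAt_tan (Real.cos_pos_of_mem_Ioo (hmem s hs)).ne').const_mul
      b).hasDerivWithinAt
  have hinj : InjOn (fun s => b * Real.tan s) (Ioo 0 (π/2)) := by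
    intro x hx y hy h
    have := Real.strictMonoOn_tan.injOn (hmem x hx) (hmem y hy)
    apply this
    field_simp at h
    exact h
  have hsub := integral_image_eq_integral_abs_deriv_smul measurableSet_Ioo hderiv hinj (F 1 b)
  rw [tan_img hb] at hsub
  have hpt : EqOn (fun s => |b * (1 / Real.cos s ^ 2)| • F 1 b (b * Real.tan s))
      (fun s => 1 / Real.sqrt (1 - m * Real.sin s ^ 2)) (Ioo 0 (π/2)) := by
    intro s hs
    have hc : 0 < Real.cos s := Real.cos_pos_of_mem_Ioo (hmem s hs)
    have hms : 0 < 1 - m * Real.sin s ^ 2 := by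
      nlinarith [Real.sin_sq_le_one s, Real.sin_sq_add_cos_sq s]
    have key : ((b * Real.tan s)^2 + 1^2) * ((b * Real.tan s)^2 + b^2)
        = (1 - m * Real.sin s ^ 2) * (b / Real.cos s ^ 2)^2 := by
      have hm : m = 1 - b^2 := by linarith [hb2]
      subst hm
      rw [Real.tan_eq_sin_div_cos]
      have hsc := Real.sin_sq_add_cos_sq s
      field_simp
      linear_combination (b^2 * Real.sin s^2 + Real.cos s^2 + 1) * hsc
    have hQ : (0:ℝ) < b / Real.cos s ^ 2 := by positivity
    show |b * (1 / Real.cos s ^ 2)| • F 1 b (b * Real.tan s) = _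
    rw [smul_eq_mul, F, key, Real.sqrt_mul hms.le, Real.sqrt_sq hQ.le,
      abs_of_pos (by positivity : (0:ℝ) < b * (1 / Real.cos s ^ 2))]
    have hs0 : Real.sqrt (1 - m * Real.sin s ^ 2) ≠ 0 := (Real.sqrt_pos.mpr hms).ne'
    field_simp
  rw [setIntegral_congr_fun measurableSet_Ioo hpt] at hsub
  rw [hsub, K0, intervalIntegral.integral_of_le (by positivity : (0:ℝ) ≤ π/2),
    ← integral_Ioc_eq_integral_Ioo]

/-! ### Main theorem -/

theorem elliptic_K_agm (m : ℝ) (hm0 : 0 < m) (hm1 : m < 1) :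
    K0 m = π / (2 * agm 1 (Real.sqrt (1 - m))) := by
  have h1m : (0:ℝ) < 1 - m := by linarith
  set b := Real.sqrt (1 - m) with hbdef
  have hb : 0 < b := Real.sqrt_pos.mpr h1m
  have hb2 : b^2 = 1 - m := Real.sq_sqrt h1m.le
  have hb1 : b ≤ 1 := by
    have h := Real.sqrt_le_sqrt (show (1:ℝ) - m ≤ 1 by linarith)
    rwa [Real.sqrt_one] at h
  obtain ⟨M, hMpos, hagm, hA, hB, hbounds⟩ := agm_tendsto hb hb1
  set J := ∫ x in Ioi (0:ℝ), F 1 b x with hJ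
  -- invariance of J along the AGM iteration
  have hinv : ∀ n, ∫ x in Ioi (0:ℝ), F (agmPair 1 b n).1 (agmPair 1 b n).2 x = J := by
    intro n
    induction n with
    | zero => rfl
    | succ n ih =>
      obtain ⟨h1, h2⟩ := agm_basic hb hb1 n
      have step := half_invariant h1 h2
      rw [ih] at step
      have e1 : (agmPair 1 b (n+1)).1 = ((agmPair 1 b n).1 + (agmPair 1 b n).2)/2 := by
        show (agmPair 1 b n).1/2 + (agmPair 1 b n).2/2 = _
        ring
      have e2 : (agmPair 1 b (n+1)).2 = Real.sqrt ((agmPair 1 b n).1 * (agmPair 1 b n).2) := rfl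
      rw [e1, e2, step]
  -- bounds on J for each n
  have hlow : ∀ n, π/(2*(agmPair 1 b n).1) ≤ J := by
    intro n
    obtain ⟨h1, h2⟩ := agm_basic hb hb1 n
    have hpos : 0 < (agmPair 1 b n).1 := lt_of_lt_of_le h1 h2
    rw [← hinv n, ← integral_Ioi_inv_sq_add hpos]
    apply setIntegral_mono_on ((integrable_inv_sq_add hpos).integrableOn)
      (F_integrableOn hpos h1 _) measurableSet_Ioi
    intro t _
    exact inv_le_F hpos h1 hpos le_rfl h2 t
  have hhigh : ∀ n, J ≤ π/(2*(agmPair 1 b n).2) := by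
    intro n
    obtain ⟨h1, h2⟩ := agm_basic hb hb1 n
    have hpos : 0 < (agmPair 1 b n).1 := lt_of_lt_of_le h1 h2
    rw [← hinv n, ← integral_Ioi_inv_sq_add h1]
    apply setIntegral_mono_on (F_integrableOn hpos h1 _)
      ((integrable_inv_sq_add h1).integrableOn) measurableSet_Ioi
    intro t _
    exact F_le_inv hpos h1 h1 h2 le_rfl t
  -- pass to the limit
  have hM2 : (2*M : ℝ) ≠ 0 := by positivity
  have htlow : Tendsto (fun n => π/(2*(agmPair 1 b n).1)) atTop (𝓝 (π/(2*M))) :=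
    tendsto_const_nhds.div (tendsto_const_nhds.mul hA) hM2
  have hthigh : Tendsto (fun n => π/(2*(agmPair 1 b n).2)) atTop (𝓝 (π/(2*M))) :=
    tendsto_const_nhds.div (tendsto_const_nhds.mul hB) hM2
  have hJval : J = π/(2*M) :=
    le_antisymm (ge_of_tendsto' hthigh hhigh) (le_of_tendsto' htlow hlow)
  rw [K0_eq_integral_F hm0 hm1 hb hb2, ← hJ, hJval, hagm]
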